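/- Let V be a real vector space and p : V × (0,1) → [0,∞) satisfy: (i) p(x,·) is nondecreasing for each x; (ii) p(·,w) is a seminorm for each w; (iii) the family {p(·,w)} is separating. Then the map ν : V → Δ⁺ defined by ν_x(t) = m({w ∈ (0,1) | p(x,w) < t}) (m = Lebesgue measure, ν_x(t) = 0 for t ≤ 0) makes (V, ν) a Šerstnev PN-space under τ_M, and moreover ‖x‖_w := (ν_x)^(w) equals the left limit l⁻p(x,w) = sup_{w' < w} p(x,w') for all x ∈ V and w ∈ (0,1). -/

import Mathlib

open Filter Topology Set

noncomputable section

/-- A distance distribution function: nondecreasing, with values in `[0,1]`,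
left-continuous, `F 0 = 0` and `sup F = 1`. -/
def IsDDF (F : ℝ → ℝ) : Prop :=
  Monotone F ∧ (∀ t, F t ∈ Set.Icc (0:ℝ) 1) ∧
  (∀ t : ℝ, Tendsto F (nhdsWithin t (Set.Iio t)) (nhds (F t))) ∧
  F 0 = 0 ∧ (⨆ t, F t) = 1

/-- A proper d.f.: `F t → 1` as `t → ∞`. -/
def IsProper (F : ℝ → ℝ) : Prop := Tendsto F atTop (nhds 1)

/-- The unit step function at `0`. -/
def H0 : ℝ → ℝ := fun t => if 0 < t then 1 else 0

/-- The quantile function `F̂(w) = sup {t | F t < w}`, valued in `EReal`. -/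
noncomputable def qhat (F : ℝ → ℝ) (w : ℝ) : EReal :=
  sSup ((fun t : ℝ => (t : EReal)) '' {t | F t < w})

/-- The triangle function `τ_M(F,G)(x) = sup_{s+t=x} min (F s) (G t)`. -/
noncomputable def tauM (F G : ℝ → ℝ) : ℝ → ℝ :=
  fun x => ⨆ s : ℝ, min (F s) (G (x - s))

/-- A Šerstnev probabilistic normed space under `τ_M`, with all `ν_x` proper. -/
structure SPN (V : Type*) [AddCommGroup V] [Module ℝ V] where
  nu : V → ℝ → ℝ
  ddf : ∀ x, IsDDF (nu x)
  proper : ∀ x, IsProper (nu x)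
  nu_eq_iff : ∀ x, nu x = H0 ↔ x = 0
  nu_add : ∀ x y t, tauM (nu x) (nu y) t ≤ nu (x + y) t
  nu_smul : ∀ a : ℝ, a ≠ 0 → ∀ x t, nu (a • x) t = nu x (t / |a|)

/-- The quantile seminorm `‖x‖_w = sup {t | ν_x t < w}`. -/
noncomputable def pnorm {V : Type*} [AddCommGroup V] [Module ℝ V]
    (S : SPN V) (x : V) (w : ℝ) : ℝ :=
  sSup {t | S.nu x t < w}

/-- The strong topology of a PN-space, generated by the balls of the seminorms `‖·‖_w`. -/
def strongTop {V : Type*} [AddCommGroup V] [Module ℝ V] (S : SPN V) : TopologicalSpace V :=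
  TopologicalSpace.generateFrom
    {U | ∃ (x : V) (w r : ℝ), w ∈ Set.Ioo (0:ℝ) 1 ∧ 0 < r ∧
      U = {y | pnorm S (y - x) w < r}}

/-- A strong Cauchy sequence. -/
def StrongCauchy {V : Type*} [AddCommGroup V] [Module ℝ V] (S : SPN V) (x : ℕ → V) : Prop :=
  ∀ t : ℝ, 0 < t → ∃ N, ∀ m ≥ N, ∀ n ≥ N, 1 - t < S.nu (x n - x m) t

/-- Strong convergence of a sequence to a point. -/
def StrongLim {V : Type*} [AddCommGroup V] [Module ℝ V] (S : SPN V) (x : ℕ → V) (p : V) : Prop :=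
  ∀ t : ℝ, 0 < t → ∃ N, ∀ n ≥ N, 1 - t < S.nu (x n - p) t

/-- Strong completeness: every strong Cauchy sequence strongly converges. -/
def StrongComplete {V : Type*} [AddCommGroup V] [Module ℝ V] (S : SPN V) : Prop :=
  ∀ x : ℕ → V, StrongCauchy S x → ∃ p, StrongLim S x p

namespace SPNaux

open MeasureTheory

variable {V : Type*} [AddCommGroup V] [Module ℝ V]

def Aset (p : V → ℝ → ℝ) (x : V) (t : ℝ) : Set ℝ :=
  {w | w ∈ Set.Ioo (0:ℝ) 1 ∧ p x w < t}

noncomputable def Fnu (p : V → ℝ → ℝ) (x : V) (t : ℝ) : ℝ :=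
  (volume (Aset p x t)).toReal

lemma vol_Ioo01 : volume (Set.Ioo (0:ℝ) 1) = 1 := by
  rw [Real.volume_Ioo]; norm_num

lemma Aset_subset (p : V → ℝ → ℝ) (x : V) (t : ℝ) : Aset p x t ⊆ Set.Ioo 0 1 :=
  fun _ hu => hu.1

lemma vol_ne_top (p : V → ℝ → ℝ) (x : V) (t : ℝ) : volume (Aset p x t) ≠ ⊤ := by
  refine ne_top_of_le_ne_top ?_ (measure_mono (Aset_subset p x t))
  rw [vol_Ioo01]; exact ENNReal.one_ne_top

lemma vol_le_one (p : V → ℝ → ℝ) (x : V) (t : ℝ) : volume (Aset p x t) ≤ 1 := by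
  rw [← vol_Ioo01]; exact measure_mono (Aset_subset p x t)

lemma Fnu_mono (p : V → ℝ → ℝ) (x : V) : Monotone (Fnu p x) := by
  intro t1 t2 h
  exact ENNReal.toReal_mono (vol_ne_top p x t2)
    (measure_mono fun u hu => ⟨hu.1, hu.2.trans_le h⟩)

lemma Fnu_mem_Icc (p : V → ℝ → ℝ) (x : V) (t : ℝ) : Fnu p x t ∈ Set.Icc (0:ℝ) 1 := by
  constructor
  · exact ENNReal.toReal_nonneg
  · have := ENNReal.toReal_mono ENNReal.one_ne_top (vol_le_one p x t)
    simpa [Fnu] using this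

lemma Fnu_nonpos (p : V → ℝ → ℝ)
    (hnn : ∀ x : V, ∀ w ∈ Set.Ioo (0:ℝ) 1, 0 ≤ p x w)
    (x : V) {t : ℝ} (ht : t ≤ 0) : Fnu p x t = 0 := by
  have : Aset p x t = ∅ := by
    ext u
    simp only [Aset, Set.mem_setOf_eq, Set.mem_empty_iff_false, iff_false, not_and]
    intro hu hlt
    exact absurd (hlt.trans_le ht) (not_lt.2 (hnn x u hu))
  simp [Fnu, this]

lemma Fnu_ge (p : V → ℝ → ℝ) (hmono : ∀ x : V, MonotoneOn (p x) (Set.Ioo (0:ℝ) 1))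
    (x : V) {w1 t : ℝ} (hw1 : w1 ∈ Set.Ioo (0:ℝ) 1) (ht : p x w1 < t) :
    w1 ≤ Fnu p x t := by
  have hsub : Set.Ioo 0 w1 ⊆ Aset p x t := by
    intro u hu
    have hu1 : u ∈ Set.Ioo (0:ℝ) 1 := ⟨hu.1, hu.2.trans hw1.2⟩
    exact ⟨hu1, lt_of_le_of_lt (hmono x hu1 hw1 hu.2.le) ht⟩
  have := ENNReal.toReal_mono (vol_ne_top p x t) (measure_mono hsub)
  rwa [Real.volume_Ioo, sub_zero, ENNReal.toReal_ofReal hw1.1.le] at this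

lemma Fnu_le (p : V → ℝ → ℝ) (hmono : ∀ x : V, MonotoneOn (p x) (Set.Ioo (0:ℝ) 1))
    (x : V) {w0 t : ℝ} (hw0 : w0 ∈ Set.Ioo (0:ℝ) 1) (ht : t ≤ p x w0) :
    Fnu p x t ≤ w0 := by
  have hsub : Aset p x t ⊆ Set.Ioo 0 w0 := by
    intro u hu
    refine ⟨hu.1.1, ?_⟩
    by_contra h
    push_neg at h
    exact lt_irrefl _ (lt_of_lt_of_le hu.2 (ht.trans (hmono x hw0 hu.1 h)))
  have := ENNReal.toReal_mono (by rw [Real.volume_Ioo]; exact ENNReal.ofReal_ne_top)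
    (measure_mono hsub)
  rwa [Real.volume_Ioo, sub_zero, ENNReal.toReal_ofReal hw0.1.le] at this

lemma Fnu_iSup (p : V → ℝ → ℝ) (hmono : ∀ x : V, MonotoneOn (p x) (Set.Ioo (0:ℝ) 1))
    (x : V) : (⨆ t, Fnu p x t) = 1 := by
  have hbdd : BddAbove (Set.range (Fnu p x)) :=
    ⟨1, by rintro r ⟨t, rfl⟩; exact (Fnu_mem_Icc p x t).2⟩
  refine le_antisymm (ciSup_le fun t => (Fnu_mem_Icc p x t).2) ?_
  by_contra h
  push_neg at h
  set c := ⨆ t, Fnu p x t with hc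
  set w1 : ℝ := (max c (1/2) + 1) / 2 with hw1
  have hc0 : (0:ℝ) < max c (1/2) + 1 := by positivity
  have hcw : max c (1/2) < w1 := by
    rw [hw1]
    have : max c (1/2) < 1 := max_lt h (by norm_num)
    linarith
  have hw1mem : w1 ∈ Set.Ioo (0:ℝ) 1 := by
    constructor
    · positivity
    · rw [hw1]
      have : max c (1/2) < 1 := max_lt h (by norm_num)
      linarith
  have : w1 ≤ Fnu p x (p x w1 + 1) := Fnu_ge p hmono x hw1mem (by linarith)
  have h2 : Fnu p x (p x w1 + 1) ≤ c := le_ciSup hbdd _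
  have : w1 ≤ c := this.trans h2
  exact absurd (lt_of_le_of_lt (le_max_left _ _) hcw) (not_lt.2 this)

lemma Fnu_leftCont (p : V → ℝ → ℝ) (x : V) (t : ℝ) :
    Tendsto (Fnu p x) (nhdsWithin t (Set.Iio t)) (nhds (Fnu p x t)) := by
  have h1 := (Fnu_mono p x).tendsto_nhdsLT t
  suffices h : sSup (Fnu p x '' Set.Iio t) = Fnu p x t by rwa [h] at h1
  have hbdd : BddAbove (Fnu p x '' Set.Iio t) := by
    refine ⟨1, ?_⟩; rintro r ⟨s, _, rfl⟩; exact (Fnu_mem_Icc p x s).2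
  refine le_antisymm (csSup_le ⟨Fnu p x (t-1), ⟨t-1, by simp, rfl⟩⟩ ?_) ?_
  · rintro r ⟨s, hs, rfl⟩
    exact Fnu_mono p x (le_of_lt hs)
  · have hm : Monotone (fun n : ℕ => Aset p x (t - 1/(n+1))) := by
      intro n m hnm u hu
      refine ⟨hu.1, lt_of_lt_of_le hu.2 ?_⟩
      have : (1:ℝ)/(m+1) ≤ 1/(n+1) := by
        apply one_div_le_one_div_of_le (by positivity)
        exact_mod_cast by omega
      linarith
    have hU : (⋃ n : ℕ, Aset p x (t - 1/(n+1))) = Aset p x t := by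
      ext u
      constructor
      · rintro ⟨S, ⟨n, rfl⟩, hu⟩
        have hp : (0:ℝ) < 1/((n:ℕ)+1) := by positivity
        exact ⟨hu.1, lt_of_lt_of_le hu.2 (by linarith)⟩
      · rintro ⟨hu1, hu2⟩
        obtain ⟨n, hn⟩ := exists_nat_one_div_lt (sub_pos.2 hu2)
        exact ⟨_, ⟨n, rfl⟩, ⟨hu1, by push_cast; linarith⟩⟩
    have htend := tendsto_measure_iUnion_atTop (μ := volume) hm
    rw [hU] at htend
    have htend2 : Tendsto (fun n : ℕ => Fnu p x (t - 1/(n+1))) atTop (nhds (Fnu p x t)) :=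
      (ENNReal.tendsto_toReal (vol_ne_top p x t)).comp htend
    refine le_of_tendsto' htend2 fun n => le_csSup hbdd ⟨t - 1/(n+1), ?_, rfl⟩
    have hp : (0:ℝ) < 1/((n:ℕ)+1) := by positivity
    simp only [Set.mem_Iio]; linarith

lemma p_zero (p : V → ℝ → ℝ)
    (hsmul : ∀ (a : ℝ) (x : V), ∀ w ∈ Set.Ioo (0:ℝ) 1, p (a • x) w = |a| * p x w)
    (w : ℝ) (hw : w ∈ Set.Ioo (0:ℝ) 1) : p (0:V) w = 0 := by
  have := hsmul 0 0 w hw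
  simpa using this

end SPNaux

open SPNaux MeasureTheory

/-- Theorem 3.10: a monotone, separating family of seminorms `p(·,w)` on a real vector
space induces a Šerstnev PN-space via `ν_x(t) = m {w ∈ (0,1) | p(x,w) < t}`, whose
quantile seminorms are the left limits `‖x‖_w = sup_{w' < w} p(x,w')`. -/
theorem spn_of_seminorm_family {V : Type*} [AddCommGroup V] [Module ℝ V]
    (p : V → ℝ → ℝ)
    (hnn : ∀ x : V, ∀ w ∈ Set.Ioo (0:ℝ) 1, 0 ≤ p x w)
    (hmono : ∀ x : V, MonotoneOn (p x) (Set.Ioo (0:ℝ) 1))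
    (hsmul : ∀ (a : ℝ) (x : V), ∀ w ∈ Set.Ioo (0:ℝ) 1, p (a • x) w = |a| * p x w)
    (htri : ∀ x y : V, ∀ w ∈ Set.Ioo (0:ℝ) 1, p (x + y) w ≤ p x w + p y w)
    (hsep : ∀ x : V, x ≠ 0 → ∃ w ∈ Set.Ioo (0:ℝ) 1, p x w ≠ 0) :
    ∃ S : SPN V,
      (∀ x : V, ∀ t : ℝ,
        S.nu x t = (MeasureTheory.volume {w | w ∈ Set.Ioo (0:ℝ) 1 ∧ p x w < t}).toReal) ∧
      (∀ x : V, ∀ w ∈ Set.Ioo (0:ℝ) 1,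
        pnorm S x w = sSup {r : ℝ | ∃ w', 0 < w' ∧ w' < w ∧ r = p x w'}) := by
  classical
  have hbddrange : ∀ x : V, BddAbove (Set.range (Fnu p x)) := fun x =>
    ⟨1, by rintro r ⟨t, rfl⟩; exact (Fnu_mem_Icc p x t).2⟩
  -- the SPN structure
  refine ⟨⟨fun x => Fnu p x, ?_, ?_, ?_, ?_, ?_⟩, fun x t => rfl, ?_⟩
  · -- ddf
    intro x
    exact ⟨Fnu_mono p x, Fnu_mem_Icc p x, Fnu_leftCont p x,
      Fnu_nonpos p hnn x le_rfl, Fnu_iSup p hmono x⟩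
  · -- proper
    intro x
    have h := tendsto_atTop_ciSup (Fnu_mono p x) (hbddrange x)
    rwa [Fnu_iSup p hmono x] at h
  · -- nu_eq_iff
    intro x
    show Fnu p x = H0 ↔ x = 0
    constructor
    · intro h
      by_contra hx
      obtain ⟨w0, hw0, hp0⟩ := hsep x hx
      have hp0' : 0 < p x w0 := lt_of_le_of_ne (hnn x w0 hw0) (Ne.symm hp0)
      have h1 : Fnu p x (p x w0) ≤ w0 := Fnu_le p hmono x hw0 le_rfl
      have h2 : Fnu p x (p x w0) = 1 := by
        rw [congrFun h (p x w0)]; simp [H0, hp0']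
      linarith [hw0.2]
    · rintro rfl
      funext t
      by_cases ht : 0 < t
      · have hA : Aset p (0:V) t = Set.Ioo 0 1 := by
          ext u
          refine ⟨fun hu => hu.1, fun hu => ⟨hu, ?_⟩⟩
          rw [p_zero p hsmul u hu]; exact ht
        simp [Fnu, hA, vol_Ioo01, H0, ht]
      · push_neg at ht
        rw [Fnu_nonpos p hnn 0 ht]
        simp [H0, not_lt.2 ht]
  · -- nu_add
    intro x y t
    refine ciSup_le fun s => ?_
    have hsum : ∀ u, u ∈ Aset p x s → u ∈ Aset p y (t - s) → u ∈ Aset p (x + y) t :=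
      fun u h1 h2 => ⟨h1.1, (htri x y u h1.1).trans_lt (by linarith [h1.2, h2.2])⟩
    by_cases h : Aset p x s ⊆ Aset p y (t - s)
    · refine (min_le_left _ _).trans ?_
      exact ENNReal.toReal_mono (vol_ne_top p (x+y) t)
        (measure_mono fun u hu => hsum u hu (h hu))
    · rw [Set.not_subset] at h
      obtain ⟨a, haA, haB⟩ := h
      have hBA : Aset p y (t - s) ⊆ Aset p x s := by
        intro b hbB
        have hab : b ≤ a := by
          by_contra hba
          push_neg at hba
          exact haB ⟨haA.1, (hmono y haA.1 hbB.1 hba.le).trans_lt hbB.2⟩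
        exact ⟨hbB.1, (hmono x hbB.1 haA.1 hab).trans_lt haA.2⟩
      refine (min_le_right _ _).trans ?_
      exact ENNReal.toReal_mono (vol_ne_top p (x+y) t)
        (measure_mono fun u hu => hsum u (hBA hu) hu)
  · -- nu_smul
    intro a ha x t
    have hA : Aset p (a • x) t = Aset p x (t / |a|) := by
      ext u
      refine and_congr_right fun hu => ?_
      rw [hsmul a x u hu, lt_div_iff₀' (abs_pos.2 ha)]
    show Fnu p (a • x) t = Fnu p x (t / |a|)
    unfold Fnu
    rw [hA]
  · -- pnorm
    intro x w hw
    show sSup {t | Fnu p x t < w} = sSup {r : ℝ | ∃ w', 0 < w' ∧ w' < w ∧ r = p x w'}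
    set P : Set ℝ := {r : ℝ | ∃ w', 0 < w' ∧ w' < w ∧ r = p x w'} with hP
    set T : Set ℝ := {t | Fnu p x t < w} with hT
    have hPne : P.Nonempty := ⟨p x (w/2), w/2, by linarith [hw.1], by linarith [hw.1], rfl⟩
    have hPbdd : BddAbove P := by
      refine ⟨p x w, ?_⟩
      rintro r ⟨w', h1, h2, rfl⟩
      exact hmono x ⟨h1, h2.trans hw.2⟩ hw h2.le
    have hub : ∀ t ∈ T, t ≤ sSup P := by
      intro t ht
      by_contra hlt
      push_neg at hlt
      have hsub : Set.Ioo 0 w ⊆ Aset p x t := by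
        intro u hu
        refine ⟨⟨hu.1, hu.2.trans hw.2⟩, lt_of_le_of_lt ?_ hlt⟩
        exact le_csSup hPbdd ⟨u, hu.1, hu.2, rfl⟩
      have hwle : w ≤ Fnu p x t := by
        have := ENNReal.toReal_mono (vol_ne_top p x t) (measure_mono hsub)
        rwa [Real.volume_Ioo, sub_zero, ENNReal.toReal_ofReal hw.1.le] at this
      exact absurd ht (not_lt.2 hwle)
    have hTne : T.Nonempty := by
      refine ⟨0, ?_⟩
      show Fnu p x 0 < w
      rw [Fnu_nonpos p hnn x le_rfl]
      exact hw.1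
    have hTbdd : BddAbove T := ⟨sSup P, hub⟩
    refine le_antisymm (csSup_le hTne hub) (csSup_le hPne ?_)
    rintro r ⟨w', h1, h2, rfl⟩
    refine le_csSup hTbdd ?_
    show Fnu p x (p x w') < w
    exact lt_of_le_of_lt (Fnu_le p hmono x ⟨h1, h2.trans hw.2⟩ le_rfl) h2
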